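/- For Stirling numbers of the second kind, Σ_{l=1}^k (l-1)! · S(k,l) ≤ k^{k-1}. -/
import Mathlib


/-- Stirling numbers of the second kind: `stirling2 k l` is the number of ways to partition a
set of `k` elements into `l` nonempty subsets. -/
def stirling2 : ℕ → ℕ → ℕ
  | 0, 0 => 1
  | 0, _ + 1 => 0
  | _ + 1, 0 => 0
  | k + 1, l + 1 => (l + 1) * stirling2 k (l + 1) + stirling2 k l

lemma stirling2_eq_zero : ∀ k l : ℕ, k < l → stirling2 k l = 0
  | 0, _ + 1, _ => rfl
  | k + 1, l + 1, h => by
    have h' : k < l := Nat.lt_of_succ_lt_succ h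
    simp [stirling2, stirling2_eq_zero k (l+1) (Nat.lt_succ_of_lt h'),
      stirling2_eq_zero k l h']

lemma mul_descFactorial (x l : ℕ) :
    x * Nat.descFactorial x l = Nat.descFactorial x (l+1) + l * Nat.descFactorial x l := by
  rcases le_or_gt l x with h | h
  · rw [Nat.descFactorial_succ, ← Nat.add_mul, Nat.sub_add_cancel h]
  · simp [Nat.descFactorial_eq_zero_iff_lt.mpr h,
      Nat.descFactorial_eq_zero_iff_lt.mpr (Nat.lt_succ_of_lt h)]

lemma stirling2_sum_descFactorial (k x : ℕ) :
    ∑ l ∈ Finset.range (k+1), stirling2 k l * Nat.descFactorial x l = x ^ k := by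
  induction k with
  | zero => simp [stirling2]
  | succ k ih =>
    have key : x ^ (k+1)
        = ∑ l ∈ Finset.range (k+1),
            (stirling2 k l * Nat.descFactorial x (l+1)
              + l * (stirling2 k l * Nat.descFactorial x l)) := by
      rw [pow_succ, mul_comm, ← ih, Finset.mul_sum]
      refine Finset.sum_congr rfl fun l _ => ?_
      rw [mul_left_comm, mul_descFactorial, Nat.mul_add]
      ring
    rw [key, Finset.sum_range_succ' _ (k+1)]
    have h0 : stirling2 (k+1) 0 * Nat.descFactorial x 0 = 0 := by simp [stirling2]
    rw [h0, add_zero]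
    have hterm : ∀ l, stirling2 (k+1) (l+1) * Nat.descFactorial x (l+1)
        = (l+1) * stirling2 k (l+1) * Nat.descFactorial x (l+1)
          + stirling2 k l * Nat.descFactorial x (l+1) := by
      intro l; rw [stirling2]; ring
    rw [Finset.sum_congr rfl fun l _ => hterm l, Finset.sum_add_distrib,
      Finset.sum_add_distrib, add_comm]
    congr 1
    have shift : ∑ l ∈ Finset.range (k+2), l * (stirling2 k l * Nat.descFactorial x l)
        = ∑ l ∈ Finset.range (k+1),
            (l+1) * stirling2 k (l+1) * Nat.descFactorial x (l+1) := by
      rw [Finset.sum_range_succ' _ (k+1)]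
      simp [mul_assoc]
    rw [← shift, Finset.sum_range_succ,
      stirling2_eq_zero k (k+1) (Nat.lt_succ_self k)]
    simp

/-- `∑_{l=1}^k (l−1)! S(k,l) ≤ k^{k−1}`. -/
theorem stirling2_factorial_sum_le (k : ℕ) (hk : 1 ≤ k) :
    ∑ l ∈ Finset.Icc 1 k, Nat.factorial (l - 1) * stirling2 k l ≤ k ^ (k - 1) := by
  have hkpos : 0 < k := hk
  have hmul : k * ∑ l ∈ Finset.Icc 1 k, Nat.factorial (l - 1) * stirling2 k l ≤ k ^ k := by
    rw [Finset.mul_sum]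
    calc ∑ l ∈ Finset.Icc 1 k, k * (Nat.factorial (l - 1) * stirling2 k l)
        ≤ ∑ l ∈ Finset.Icc 1 k, stirling2 k l * Nat.descFactorial k l := by
          refine Finset.sum_le_sum fun l hl => ?_
          obtain ⟨hl1, hlk⟩ := Finset.mem_Icc.mp hl
          obtain ⟨m, rfl⟩ : ∃ m, k = m + 1 := ⟨k - 1, by omega⟩
          obtain ⟨j, rfl⟩ : ∃ j, l = j + 1 := ⟨l - 1, by omega⟩
          have hdesc : Nat.descFactorial (m+1) (j+1)
              = (m+1) * Nat.descFactorial (m+1-1) (j+1-1) := by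
            simp only [Nat.add_sub_cancel]
            exact Nat.succ_descFactorial_succ m j
          have hfac : Nat.factorial (j+1-1) ≤ Nat.descFactorial (m+1-1) (j+1-1) := by
            rw [Nat.descFactorial_eq_factorial_mul_choose]
            exact Nat.le_mul_of_pos_right _ (Nat.choose_pos (by omega))
          calc (m+1) * (Nat.factorial (j+1-1) * stirling2 (m+1) (j+1))
              ≤ (m+1) * (Nat.descFactorial (m+1-1) (j+1-1) * stirling2 (m+1) (j+1)) := by
                exact Nat.mul_le_mul_left _ (Nat.mul_le_mul_right _ hfac)
            _ = stirling2 (m+1) (j+1) * Nat.descFactorial (m+1) (j+1) := by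
                rw [hdesc]; ring
      _ ≤ ∑ l ∈ Finset.range (k+1), stirling2 k l * Nat.descFactorial k l := by
          refine Finset.sum_le_sum_of_subset ?_
          intro l hl
          obtain ⟨_, hlk⟩ := Finset.mem_Icc.mp hl
          exact Finset.mem_range.mpr (by omega)
      _ = k ^ k := stirling2_sum_descFactorial k k
  have hkk : k ^ k = k * k ^ (k - 1) := by
    obtain ⟨m, rfl⟩ : ∃ m, k = m + 1 := ⟨k - 1, by omega⟩
    simp [pow_succ, Nat.mul_comm]
  rw [hkk] at hmul
  exact Nat.le_of_mul_le_mul_left hmul hkpos
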